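/- arXiv:1002.1247 — 2 statements merged into one kernel-verified Lean document; each statement's English description precedes it below -/
import Mathlib

section
/- Let N ≥ 2 and M be the line segment in ℝ^N joining the origin to e₁ = (1,0,…,0). Let 0 ≤ γ < π/2 with cos γ < 1/√N, and let Φ be the 1×N matrix √N·(cos γ, −sin γ, 0, …, 0). Then for all distinct x₁,x₂ ∈ M, ‖Φx₁−Φx₂‖/‖x₁−x₂‖ = √N·cos γ; moreover for x = (1, tan(π/2−γ), 0, …, 0), the nearest point on M to x is x* = e₁ while Φx = 0, so the Euclidean-nearest point on M to Φx (in the image) is x̂ = 0, and ‖x−x̂‖/‖x−x*‖ = 1/cos γ = √N/(1−ε), where 1−ε := √N·cos γ. -/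
lemma aux_norm {N : ℕ} (hN : 2 ≤ N) (a b : ℝ)
    (v : EuclideanSpace ℝ (Fin N))
    (hv : ∀ i, v i = if i = (⟨0, lt_of_lt_of_le Nat.zero_lt_two hN⟩ : Fin N) then a
      else if i = (⟨1, lt_of_lt_of_le Nat.one_lt_two hN⟩ : Fin N) then b else 0) :
    ‖v‖ = Real.sqrt (a ^ 2 + b ^ 2) := by
  set i0 : Fin N := ⟨0, by omega⟩
  set i1 : Fin N := ⟨1, by omega⟩
  have h01 : i0 ≠ i1 := by simp [i0, i1, Fin.ext_iff]
  rw [EuclideanSpace.norm_eq]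
  congr 1
  calc ∑ i, ‖v i‖ ^ 2
      = ∑ i, ((if i = i0 then a ^ 2 else 0) + (if i = i1 then b ^ 2 else 0)) := by
        apply Finset.sum_congr rfl
        intro i _
        rw [hv i]
        split_ifs with h1 h2 <;> simp_all
    _ = a ^ 2 + b ^ 2 := by
        rw [Finset.sum_add_distrib, Finset.sum_ite_eq' Finset.univ i0,
          Finset.sum_ite_eq' Finset.univ i1]
        simp

theorem stmt2 (N : ℕ) (hN : 2 ≤ N) (γ : ℝ) (hγ0 : 0 ≤ γ) (hγ : γ < Real.pi / 2)
    (hcos : Real.cos γ < 1 / Real.sqrt N)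
    (e₁ : EuclideanSpace ℝ (Fin N)) (he₁ : e₁ = EuclideanSpace.single (⟨0, by omega⟩ : Fin N) 1)
    (M : Set (EuclideanSpace ℝ (Fin N))) (hM : M = {p | ∃ t ∈ Set.Icc (0:ℝ) 1, p = t • e₁})
    (Φ : EuclideanSpace ℝ (Fin N) → ℝ)
    (hΦ : Φ = fun v => Real.sqrt N * (Real.cos γ * v (⟨0, by omega⟩ : Fin N)
      - Real.sin γ * v (⟨1, by omega⟩ : Fin N)))
    (x : EuclideanSpace ℝ (Fin N))
    (hx : x = fun i => if i = (⟨0, by omega⟩ : Fin N) then 1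
      else if i = (⟨1, by omega⟩ : Fin N) then Real.tan (Real.pi / 2 - γ) else 0) :
    (∀ x₁ ∈ M, ∀ x₂ ∈ M, x₁ ≠ x₂ →
        |Φ x₁ - Φ x₂| / ‖x₁ - x₂‖ = Real.sqrt N * Real.cos γ) ∧
    (∀ p ∈ M, ‖x - e₁‖ ≤ ‖x - p‖) ∧
    Φ x = 0 ∧
    ((0 : EuclideanSpace ℝ (Fin N)) ∈ M ∧ ∀ p ∈ M, |Φ x - Φ 0| ≤ |Φ x - Φ p|) ∧
    ‖x - 0‖ / ‖x - e₁‖ = 1 / Real.cos γ ∧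
    1 / Real.cos γ = Real.sqrt N / (Real.sqrt N * Real.cos γ) := by
  set i0 : Fin N := ⟨0, by omega⟩ with hi0
  set i1 : Fin N := ⟨1, by omega⟩ with hi1
  have h01 : i0 ≠ i1 := by simp [i0, i1, Fin.ext_iff]
  have hNpos : (0:ℝ) < Real.sqrt N := Real.sqrt_pos.mpr (by positivity)
  have hN1 : (1:ℝ) < Real.sqrt N := by
    rw [show (1:ℝ) = Real.sqrt 1 by simp]
    exact Real.sqrt_lt_sqrt (by norm_num) (by exact_mod_cast hN.trans_lt' (by norm_num))
  have hγpos : 0 < γ := by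
    rcases lt_or_eq_of_le hγ0 with h | h
    · exact h
    · exfalso
      rw [← h, Real.cos_zero] at hcos
      have : 1 / Real.sqrt N < 1 := by
        rw [div_lt_one hNpos]; exact hN1
      linarith
  have hc : 0 < Real.cos γ := Real.cos_pos_of_mem_Ioo ⟨by linarith [Real.pi_pos], hγ⟩
  have hs : 0 < Real.sin γ :=
    Real.sin_pos_of_pos_of_lt_pi hγpos (by linarith [Real.pi_pos])
  -- tan value
  have hT : Real.tan (Real.pi / 2 - γ) = Real.cos γ / Real.sin γ := by
    rw [Real.tan_eq_sin_div_cos, Real.sin_pi_div_two_sub, Real.cos_pi_div_two_sub]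
  set T := Real.tan (Real.pi / 2 - γ) with hTdef
  -- coordinates of e₁ and scalar multiples
  have he₁i : ∀ i, e₁ i = if i = i0 then 1 else 0 := by
    intro i; rw [he₁]; exact EuclideanSpace.single_apply i0 1 i
  have hsmul : ∀ (t : ℝ) (i : Fin N), (t • e₁) i = if i = i0 then t else 0 := by
    intro t i
    have : (t • e₁) i = t * e₁ i := rfl
    rw [this, he₁i]; split_ifs <;> ring
  have hsm0 : ∀ t : ℝ, (t • e₁) i0 = t := by intro t; rw [hsmul]; simp
  have hsm1 : ∀ t : ℝ, (t • e₁) i1 = 0 := by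
    intro t; rw [hsmul]; simp [Ne.symm h01]
  have hx0 : x i0 = 1 := by simp [hx]
  have hx1 : x i1 = T := by simp [hx, Ne.symm h01]
  have hΦt : ∀ t : ℝ, Φ (t • e₁) = Real.sqrt N * Real.cos γ * t := by
    intro t
    simp only [hΦ]
    rw [hsm0, hsm1]
    ring
  have hnorm_te : ∀ t : ℝ, ‖(t • e₁ : EuclideanSpace ℝ (Fin N))‖ = |t| := by
    intro t
    rw [aux_norm hN t 0 _ (fun i => by rw [hsmul]; split_ifs <;> rfl)]
    simp [Real.sqrt_sq_eq_abs]
  -- x - t • e₁ coordinates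
  have hxsub : ∀ (t : ℝ) (i : Fin N),
      (x - t • e₁) i = if i = i0 then 1 - t else if i = i1 then T else 0 := by
    intro t i
    have h : (x - t • e₁) i = x i - (t • e₁) i := rfl
    rw [h, hsmul]
    by_cases h1 : i = i0
    · subst h1; rw [hx0]; simp
    · by_cases h2 : i = i1
      · subst h2; rw [hx1]; simp [Ne.symm h01]
      · simp [hx, h1, h2]
  have hnx : ∀ t : ℝ, ‖x - t • e₁‖ = Real.sqrt ((1 - t) ^ 2 + T ^ 2) := fun t =>
    aux_norm hN (1 - t) T _ (hxsub t)
  have hΦx : Φ x = 0 := by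
    simp only [hΦ]
    rw [hx0, hx1, hT]
    field_simp
    ring
  refine ⟨?_, ?_, hΦx, ⟨?_, ?_⟩, ?_, ?_⟩
  · rintro x₁ hx₁ x₂ hx₂ hne
    rw [hM] at hx₁ hx₂
    obtain ⟨t₁, ht₁, rfl⟩ := hx₁
    obtain ⟨t₂, ht₂, rfl⟩ := hx₂
    have hsub : t₁ • e₁ - t₂ • e₁ = (t₁ - t₂) • e₁ := by rw [sub_smul]
    have htne : t₁ - t₂ ≠ 0 := by
      intro h
      exact hne (by rw [sub_eq_zero.mp h])
    rw [hΦt, hΦt, hsub, hnorm_te]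
    rw [show Real.sqrt ↑N * Real.cos γ * t₁ - Real.sqrt ↑N * Real.cos γ * t₂
        = Real.sqrt ↑N * Real.cos γ * (t₁ - t₂) by ring,
      abs_mul, abs_of_pos (by positivity : (0:ℝ) < Real.sqrt ↑N * Real.cos γ)]
    field_simp
  · intro p hp
    rw [hM] at hp
    obtain ⟨t, ht, rfl⟩ := hp
    have h1 : x - e₁ = x - (1:ℝ) • e₁ := by rw [one_smul]
    rw [h1, hnx, hnx]
    apply Real.sqrt_le_sqrt
    nlinarith [sq_nonneg (1 - t), ht.2]
  · rw [hM]
    exact ⟨0, by norm_num, by simp⟩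
  · intro p hp
    rw [hM] at hp
    obtain ⟨t, ht, rfl⟩ := hp
    have h0 : (0 : EuclideanSpace ℝ (Fin N)) = (0:ℝ) • e₁ := by simp
    rw [h0, hΦt, hΦt, hΦx]
    simp [abs_nonneg]
    positivity
  · have h1 : x - 0 = x - (0:ℝ) • e₁ := by simp
    have h2 : x - e₁ = x - (1:ℝ) • e₁ := by rw [one_smul]
    rw [h1, h2, hnx, hnx, hT]
    have hs' : Real.sin γ ≠ 0 := ne_of_gt hs
    have e1 : (1 - 0) ^ 2 + (Real.cos γ / Real.sin γ) ^ 2 = (1 / Real.sin γ) ^ 2 := by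
      have key := Real.sin_sq_add_cos_sq γ
      field_simp
      linear_combination key
    have e2 : (1 - 1) ^ 2 + (Real.cos γ / Real.sin γ) ^ 2
        = (Real.cos γ / Real.sin γ) ^ 2 := by ring
    rw [e1, e2, Real.sqrt_sq (by positivity), Real.sqrt_sq (by positivity)]
    field_simp
  · rw [eq_div_iff (by positivity)]
    field_simp
end

section
/- Let M be a compact subset of ℝ^N, A ⊆ M a finite set of anchor points such that every point of M is within ℓ₂-distance T of some point of A, and Φ : ℝ^N → ℝ^m linear. Suppose: (i) for all a₁,a₂ ∈ A ∪ {x, x*}, (1−ε₁)‖a₁−a₂‖ ≤ ‖Φa₁−Φa₂‖ ≤ (1+ε₁)‖a₁−a₂‖; (ii) for all p,q ∈ M, (1−ε)‖p−q‖ ≤ ‖Φp−Φq‖ ≤ (1+ε)‖p−q‖. Let y = Φx + n, let x̂ ∈ M minimize ‖y − Φx'‖ and x* ∈ M minimize ‖x − x'‖. Then ‖x − x̂‖ ≤ (2‖n‖)/(1−ε₁) + ((1+ε₁)/(1−ε₁))·‖x − x*‖ + T·((1+ε)/(1−ε₁) + 1). -/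
theorem stmt6 (N m : ℕ) (ε ε₁ T : ℝ) (hε₁0 : 0 < ε₁) (hε₁ε : ε₁ ≤ ε) (hε1 : ε < 1)
    (hT : 0 ≤ T)
    (M : Set (EuclideanSpace ℝ (Fin N))) (hM : IsCompact M)
    (A : Set (EuclideanSpace ℝ (Fin N))) (hAfin : A.Finite) (hAM : A ⊆ M)
    (hcover : ∀ p ∈ M, ∃ a ∈ A, ‖p - a‖ ≤ T)
    (Φ : EuclideanSpace ℝ (Fin N) →ₗ[ℝ] EuclideanSpace ℝ (Fin m))
    (x : EuclideanSpace ℝ (Fin N)) (n : EuclideanSpace ℝ (Fin m))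
    (y : EuclideanSpace ℝ (Fin m)) (hy : y = Φ x + n)
    (xstar : EuclideanSpace ℝ (Fin N)) (hxstar : xstar ∈ M)
    (hxstarmin : ∀ x' ∈ M, ‖x - xstar‖ ≤ ‖x - x'‖)
    (xhat : EuclideanSpace ℝ (Fin N)) (hxhat : xhat ∈ M)
    (hxhatmin : ∀ x' ∈ M, ‖y - Φ xhat‖ ≤ ‖y - Φ x'‖)
    (hembA : ∀ a₁ ∈ A ∪ {x, xstar}, ∀ a₂ ∈ A ∪ {x, xstar},
      (1 - ε₁) * ‖a₁ - a₂‖ ≤ ‖Φ a₁ - Φ a₂‖ ∧ ‖Φ a₁ - Φ a₂‖ ≤ (1 + ε₁) * ‖a₁ - a₂‖)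
    (hembM : ∀ p ∈ M, ∀ q ∈ M,
      (1 - ε) * ‖p - q‖ ≤ ‖Φ p - Φ q‖ ∧ ‖Φ p - Φ q‖ ≤ (1 + ε) * ‖p - q‖) :
    ‖x - xhat‖ ≤ 2 * ‖n‖ / (1 - ε₁) + ((1 + ε₁) / (1 - ε₁)) * ‖x - xstar‖ +
      T * ((1 + ε) / (1 - ε₁) + 1) := by
  obtain ⟨a, haA, haT⟩ := hcover xhat hxhat
  have haM : a ∈ M := hAM haA
  have hxmem : x ∈ A ∪ {x, xstar} := Or.inr (by simp)
  have hxsmem : xstar ∈ A ∪ {x, xstar} := Or.inr (by simp)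
  have hamem : a ∈ A ∪ {x, xstar} := Or.inl haA
  have h1 : (1 - ε₁) * ‖x - a‖ ≤ ‖Φ x - Φ a‖ := (hembA x hxmem a hamem).1
  have h2 : ‖Φ x - Φ xstar‖ ≤ (1 + ε₁) * ‖x - xstar‖ := (hembA x hxmem xstar hxsmem).2
  have h3 : ‖Φ xhat - Φ a‖ ≤ (1 + ε) * ‖xhat - a‖ := (hembM xhat hxhat a haM).2
  have h4 : ‖y - Φ xhat‖ ≤ ‖y - Φ xstar‖ := hxhatmin xstar hxstar
  have hny : ‖Φ x - y‖ = ‖n‖ := by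
    have : Φ x - y = -n := by rw [hy]; abel
    rw [this, norm_neg]
  have h5 : ‖y - Φ xstar‖ ≤ ‖n‖ + ‖Φ x - Φ xstar‖ := by
    have : y - Φ xstar = n + (Φ x - Φ xstar) := by rw [hy]; abel
    rw [this]; exact norm_add_le _ _
  have tri : ‖Φ x - Φ a‖ ≤ ‖Φ x - y‖ + ‖y - Φ xhat‖ + ‖Φ xhat - Φ a‖ := by
    have : Φ x - Φ a = (Φ x - y) + (y - Φ xhat) + (Φ xhat - Φ a) := by abel
    rw [this]; exact norm_add₃_le
  have tri2 : ‖x - xhat‖ ≤ ‖x - a‖ + ‖xhat - a‖ := by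
    have : x - xhat = (x - a) - (xhat - a) := by abel
    rw [this]; exact norm_sub_le _ _
  have h1ε : 0 < 1 - ε₁ := by linarith
  have hnn : 0 ≤ ‖xhat - a‖ := norm_nonneg _
  have key : (1 - ε₁) * ‖x - xhat‖ ≤
      2 * ‖n‖ + (1 + ε₁) * ‖x - xstar‖ + T * ((1 + ε) + (1 - ε₁)) := by
    nlinarith [norm_nonneg (x - a), norm_nonneg (x - xhat)]
  calc ‖x - xhat‖ = ((1 - ε₁) * ‖x - xhat‖) / (1 - ε₁) := by field_simp
    _ ≤ (2 * ‖n‖ + (1 + ε₁) * ‖x - xstar‖ + T * ((1 + ε) + (1 - ε₁))) / (1 - ε₁) :=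
        (div_le_div_iff_of_pos_right h1ε).mpr key
    _ = 2 * ‖n‖ / (1 - ε₁) + ((1 + ε₁) / (1 - ε₁)) * ‖x - xstar‖ +
      T * ((1 + ε) / (1 - ε₁) + 1) := by field_simp
end
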